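/- Let k ≥ 2, q ≥ 1 be integers, x > 1 a real number, and Φ(s) = φ(k, qs) η_k(qs) x^s / s with φ(k, w) = (1 − k^{−w})^{−1} and η_k(w) = (1 − k^{1−w})ζ(w). Then Φ has a double pole at s = 0 and its residue there equals (k−1) · (log x)/(2q log k) + C(k, q) for some constant C(k, q) independent of x. In particular, the residue equals (k−1) log x/(2q log k) + O_{k,q}(1). -/

import Mathlib

open Complex Filter

private lemma analyticAt_dslope' {f : ℂ → ℂ} {z₀ : ℂ} (hf : AnalyticAt ℂ f z₀) :
    AnalyticAt ℂ (dslope f z₀) z₀ := by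
  obtain ⟨p, hp⟩ := hf
  exact ⟨p.fslope, hp.has_fpower_series_dslope_fslope⟩

private lemma hasDerivAt_conj_conj {f : ℂ → ℂ} {d s : ℂ}
    (hf : HasDerivAt f d ((starRingEnd ℂ) s)) :
    HasDerivAt (fun z => (starRingEnd ℂ) (f ((starRingEnd ℂ) z))) ((starRingEnd ℂ) d) s := by
  rw [hasDerivAt_iff_isLittleO] at hf ⊢
  have hc : Filter.Tendsto (fun z : ℂ => (starRingEnd ℂ) z) (nhds s)
      (nhds ((starRingEnd ℂ) s)) := Complex.continuous_conj.tendsto s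
  have h1 := hf.comp_tendsto hc
  rw [Asymptotics.isLittleO_iff] at h1 ⊢
  intro c hc'
  filter_upwards [h1 hc'] with z hz
  have e1 : (starRingEnd ℂ) (f ((starRingEnd ℂ) z)) - (starRingEnd ℂ) (f ((starRingEnd ℂ) s))
      - (z - s) • (starRingEnd ℂ) d
      = (starRingEnd ℂ) (f ((starRingEnd ℂ) z) - f ((starRingEnd ℂ) s)
          - (((starRingEnd ℂ) z) - ((starRingEnd ℂ) s)) • d) := by
    simp only [smul_eq_mul, map_sub, map_mul, Complex.conj_conj]
  rw [e1, RCLike.norm_conj]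
  calc ‖f ((starRingEnd ℂ) z) - f ((starRingEnd ℂ) s)
        - (((starRingEnd ℂ) z) - ((starRingEnd ℂ) s)) • d‖
      ≤ c * ‖(starRingEnd ℂ) z - (starRingEnd ℂ) s‖ := hz
    _ = c * ‖z - s‖ := by rw [← map_sub, RCLike.norm_conj]

private lemma zeta_analyticOnNhd : AnalyticOnNhd ℂ riemannZeta ({1}ᶜ : Set ℂ) :=
  DifferentiableOn.analyticOnNhd
    (fun t ht => (differentiableAt_riemannZeta ht).differentiableWithinAt)
    isOpen_compl_singleton

private lemma zeta_conj {s : ℂ} (hs : s ≠ 1) :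
    (starRingEnd ℂ) (riemannZeta ((starRingEnd ℂ) s)) = riemannZeta s := by
  have hpc : IsPreconnected ({1}ᶜ : Set ℂ) :=
    (isConnected_compl_singleton_of_one_lt_rank
      (rank_real_complex ▸ Nat.one_lt_ofNat) _).isPreconnected
  have hf : AnalyticOnNhd ℂ (fun z => (starRingEnd ℂ) (riemannZeta ((starRingEnd ℂ) z)))
      ({1}ᶜ : Set ℂ) := by
    refine DifferentiableOn.analyticOnNhd (fun t ht => ?_) isOpen_compl_singleton
    have htc : (starRingEnd ℂ) t ≠ 1 := by
      intro h; exact ht (by simpa using congrArg (starRingEnd ℂ) h)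
    exact (hasDerivAt_conj_conj
      (differentiableAt_riemannZeta htc).hasDerivAt).differentiableAt.differentiableWithinAt
  have h2 : (2:ℂ) ∈ ({1}ᶜ : Set ℂ) := by norm_num
  have hev : (fun z => (starRingEnd ℂ) (riemannZeta ((starRingEnd ℂ) z)))
      =ᶠ[nhds (2:ℂ)] riemannZeta := by
    refine Filter.eventually_of_mem
      ((continuous_re.isOpen_preimage _ isOpen_Ioi).mem_nhds
        (by norm_num : (2:ℂ) ∈ re ⁻¹' Set.Ioi 1)) ?_
    intro t ht
    have ht' : 1 < t.re := ht
    show (starRingEnd ℂ) (riemannZeta ((starRingEnd ℂ) t)) = riemannZeta t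
    have htc : 1 < ((starRingEnd ℂ) t).re := by rwa [Complex.conj_re]
    rw [zeta_eq_tsum_one_div_nat_cpow htc, zeta_eq_tsum_one_div_nat_cpow ht',
      starRingEnd_apply, tsum_star]
    congr 1
    funext n
    have harg : ((n:ℂ)).arg ≠ Real.pi := by
      rw [Complex.natCast_arg]; exact (Real.pi_ne_zero).symm
    simp only [← starRingEnd_apply]
    rw [Complex.cpow_conj _ _ harg]
    simp [Complex.conj_natCast, map_div₀]
  exact hf.eqOn_of_preconnected_of_eventuallyEq zeta_analyticOnNhd hpc h2 hev hs

theorem stmt_9 (k q : ℕ) (hk : 2 ≤ k) (hq : 1 ≤ q) :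
    ∃ C : ℝ, ∀ x : ℝ, 1 < x →
      ∃ (c₂ : ℂ) (G : ℂ → ℂ), AnalyticAt ℂ G 0 ∧ c₂ ≠ 0 ∧
        ∀ᶠ s in nhdsWithin (0 : ℂ) {(0 : ℂ)}ᶜ,
          (1 - (k : ℂ) ^ (-((q : ℂ) * s)))⁻¹ * ((1 - (k : ℂ) ^ (1 - (q : ℂ) * s)) *
              riemannZeta ((q : ℂ) * s)) * (x : ℂ) ^ s / s =
            c₂ / s ^ 2 +
              ((((k : ℝ) - 1) * Real.log x / (2 * (q : ℝ) * Real.log k) + C : ℝ) : ℂ) / s +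
              G s := by
  have hk1 : (1:ℝ) < k := by exact_mod_cast hk.trans_lt' one_lt_two
  have hk0 : (0:ℝ) < k := by linarith
  set lk : ℝ := Real.log k with hlk_def
  have hlk : 0 < lk := Real.log_pos hk1
  have hq0 : (0:ℝ) < q := by exact_mod_cast hq
  set a : ℝ := q * lk with ha_def
  have ha : (0:ℝ) < a := mul_pos hq0 hlk
  have haC : (a:ℂ) ≠ 0 := by exact_mod_cast ha.ne'
  have hkC : (k:ℂ) ≠ 0 := by exact_mod_cast hk0.ne'
  have hcpow_eq : ∀ w : ℂ, (k:ℂ) ^ w = Complex.exp ((lk:ℂ) * w) := by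
    intro w
    rw [Complex.cpow_def_of_ne_zero hkC]
    congr 2
    rw [show ((k:ℂ)) = (((k:ℝ)):ℂ) by push_cast; ring, ← Complex.ofReal_log hk0.le]
  -- the function f and its dslope D
  set f : ℂ → ℂ := fun s => 1 - Complex.exp (-((a:ℂ) * s)) with hf_def
  have hfanal : AnalyticAt ℂ f 0 :=
    analyticAt_const.sub ((analyticAt_const.mul analyticAt_id).neg.cexp)
  have hfderiv : HasDerivAt f ((a:ℂ)) 0 := by
    have h1 : HasDerivAt (fun s : ℂ => -((a:ℂ) * s)) (-(a:ℂ)) 0 := by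
      exact (((hasDerivAt_id (0:ℂ)).const_mul (a:ℂ)).neg).congr_deriv (by simp)
    have h2 := h1.cexp
    have h3 := (hasDerivAt_const (0:ℂ) (1:ℂ)).sub h2
    exact h3.congr_deriv (by simp)
  set D : ℂ → ℂ := dslope f 0 with hD_def
  have hDanal : AnalyticAt ℂ D 0 := analyticAt_dslope' hfanal
  have hD0 : D 0 = (a:ℂ) := by rw [hD_def, dslope_same]; exact hfderiv.deriv
  have hDne : D 0 ≠ 0 := by rw [hD0]; exact haC
  -- the eta part
  set η : ℂ → ℂ := fun s => (1 - (k:ℂ) ^ (1 - (q:ℂ) * s)) * riemannZeta ((q:ℂ) * s) with hη_def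
  have hηanal : AnalyticAt ℂ η 0 := by
    have h1 : AnalyticAt ℂ (fun s : ℂ => (1 - (k:ℂ) ^ (1 - (q:ℂ) * s))) 0 := by
      have : (fun s : ℂ => (1 - (k:ℂ) ^ (1 - (q:ℂ) * s)))
          = fun s : ℂ => 1 - Complex.exp ((lk:ℂ) * (1 - (q:ℂ) * s)) := by
        funext s; rw [hcpow_eq]
      rw [this]
      exact analyticAt_const.sub
        ((analyticAt_const.mul (analyticAt_const.sub (analyticAt_const.mul analyticAt_id))).cexp)
    have h2 : AnalyticAt ℂ (fun s : ℂ => riemannZeta ((q:ℂ) * s)) 0 := by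
      have hz : AnalyticAt ℂ riemannZeta ((q:ℂ) * 0) := by
        apply zeta_analyticOnNhd
        simp
      exact hz.comp (analyticAt_const.mul analyticAt_id)
    exact h1.mul h2
  -- B and its derivative
  set B : ℂ → ℂ := fun s => (D s)⁻¹ * η s with hB_def
  have hBanal : AnalyticAt ℂ B 0 := (hDanal.inv hDne).mul hηanal
  have hB0 : B 0 = ((((k:ℝ) - 1) / (2 * a) : ℝ) : ℂ) := by
    have hη0 : η 0 = (1 - (k:ℂ)) * (-1/2) := by
      simp only [hη_def, mul_zero, sub_zero, Complex.cpow_one, riemannZeta_zero]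
    simp only [hB_def, hη0, hD0]
    push_cast
    rw [eq_div_iff (mul_ne_zero two_ne_zero haC)]
    field_simp
    ring
  set d : ℂ := deriv B 0 with hd_def
  have hd : HasDerivAt B d 0 := hBanal.differentiableAt.hasDerivAt
  -- realness of B on the reals near 0
  have hBreal : ∀ᶠ t : ℝ in nhds 0, (B (t:ℂ)).im = 0 := by
    have hmem : Set.Ioo (-(1/(q:ℝ))) (1/(q:ℝ)) ∈ nhds (0:ℝ) :=
      Ioo_mem_nhds (neg_lt_zero.mpr (by positivity)) (by positivity)
    filter_upwards [hmem] with t ht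
    rcases eq_or_ne t 0 with rfl | ht0
    · rw [show ((0:ℝ):ℂ) = 0 by norm_num, hB0]; exact Complex.ofReal_im _
    · have ht0' : (t:ℂ) ≠ 0 := by exact_mod_cast ht0
      rw [← Complex.conj_eq_iff_im]
      have hqt : (q:ℂ) * (t:ℂ) ≠ 1 := by
        have h1 : (q:ℝ) * t < 1 := by
          rcases lt_or_ge t 0 with h | h
          · nlinarith
          · have h2 : (q:ℝ) * t < (q:ℝ) * (1/(q:ℝ)) := mul_lt_mul_of_pos_left ht.2 hq0
            have h3 : (q:ℝ) * (1/(q:ℝ)) = 1 := by field_simp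
            linarith
        intro h
        apply h1.ne
        exact_mod_cast h
      have hDt : (starRingEnd ℂ) (D (t:ℂ)) = D (t:ℂ) := by
        rw [hD_def, dslope_of_ne f ht0', slope_def_field]
        simp [hf_def, map_div₀, ← Complex.exp_conj, Complex.conj_ofReal]
      have hηt : (starRingEnd ℂ) (η (t:ℂ)) = η (t:ℂ) := by
        have hz : (starRingEnd ℂ) (riemannZeta ((q:ℂ) * (t:ℂ))) = riemannZeta ((q:ℂ) * (t:ℂ)) := by
          have hr : (starRingEnd ℂ) ((q:ℂ) * (t:ℂ)) = (q:ℂ) * (t:ℂ) := by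
            simp [Complex.conj_ofReal]
          conv_lhs => rw [← hr]
          exact zeta_conj hqt
        simp only [hη_def]
        rw [map_mul, hz, map_sub, map_one, hcpow_eq, ← Complex.exp_conj]
        simp [Complex.conj_ofReal]
      rw [hB_def]
      simp only [map_mul, map_inv₀, hDt, hηt]
  have him : d.im = 0 := by
    have h1 : HasDerivAt (fun t : ℝ => B (t:ℂ)) d 0 := by
      have := hd.comp_ofReal (z := 0)
      simpa using this
    have h2 : HasDerivAt (fun t : ℝ => (B (t:ℂ)).im) d.im 0 := by
      simpa [Function.comp_def] using (Complex.imCLM.hasFDerivAt.comp_hasDerivAt 0 h1)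
    have h3 : HasDerivAt (fun t : ℝ => (B (t:ℂ)).im) 0 0 := by
      refine (hasDerivAt_const (0:ℝ) (0:ℝ)).congr_of_eventuallyEq ?_
      filter_upwards [hBreal] with t ht
      simp [ht]
    exact h2.unique h3
  have hdC : d = ((d.re : ℝ) : ℂ) := by
    rw [Complex.ext_iff]
    constructor
    · simp
    · simp [him]
  refine ⟨d.re, ?_⟩
  intro x hx
  have hx0 : (0:ℝ) < x := by linarith
  have hxC : (x:ℂ) ≠ 0 := by exact_mod_cast hx0.ne'
  set L : ℝ := Real.log x with hL_def
  have hxpow : ∀ s : ℂ, (x:ℂ) ^ s = Complex.exp ((L:ℂ) * s) := by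
    intro s
    rw [Complex.cpow_def_of_ne_zero hxC]
    congr 2
    rw [← Complex.ofReal_log hx0.le]
  set F : ℂ → ℂ := fun s => B s * Complex.exp ((L:ℂ) * s) with hF_def
  have hFanal : AnalyticAt ℂ F 0 :=
    hBanal.mul ((analyticAt_const.mul analyticAt_id).cexp)
  have hF0 : F 0 = B 0 := by simp [hF_def]
  have hc₂ne : F 0 ≠ 0 := by
    rw [hF0, hB0]
    rw [Complex.ofReal_ne_zero]
    have h2 : (0:ℝ) < (k:ℝ) - 1 := by linarith
    exact (div_pos h2 (by positivity)).ne'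
  have hexp : HasDerivAt (fun s : ℂ => Complex.exp ((L:ℂ) * s)) ((L:ℂ)) 0 := by
    have h1 : HasDerivAt (fun s : ℂ => (L:ℂ) * s) ((L:ℂ)) 0 := by
      simpa using (hasDerivAt_id (0:ℂ)).const_mul (L:ℂ)
    simpa using h1.cexp
  have hF' : HasDerivAt F (d + B 0 * (L:ℂ)) 0 := by
    have := hd.mul hexp
    exact this.congr_deriv (by simp)
  have hderivF : deriv F 0 = ((((k:ℝ) - 1) * L / (2 * (q:ℝ) * lk) + d.re : ℝ) : ℂ) := by
    rw [hF'.deriv]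
    rw [hdC, hB0]
    push_cast
    rw [ha_def]
    field_simp
    simp only [Complex.ofReal_re, Complex.ofReal_mul, Complex.ofReal_natCast]
    ring
  set G : ℂ → ℂ := dslope (dslope F 0) 0 with hG_def
  have hGanal : AnalyticAt ℂ G 0 := analyticAt_dslope' (analyticAt_dslope' hFanal)
  refine ⟨F 0, G, hGanal, hc₂ne, ?_⟩
  refine Filter.eventually_of_mem self_mem_nhdsWithin (fun s hs => ?_)
  have hs0 : s ≠ 0 := hs
  -- rewrite the left side as F s / s ^ 2
  have e1 : (1 - (k:ℂ) ^ (-((q:ℂ) * s))) = f s := by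
    rw [hcpow_eq, show (lk:ℂ) * (-((q:ℂ) * s)) = -((a:ℂ) * s) by rw [ha_def]; push_cast; ring]
  have e2 : f s = s * D s := by
    have h := sub_smul_dslope f 0 s
    have hf0 : f 0 = 0 := by simp [hf_def]
    rw [hf0, sub_zero, sub_zero, smul_eq_mul] at h
    rw [← h, hD_def]
  have eLHS : (1 - (k : ℂ) ^ (-((q : ℂ) * s)))⁻¹ * η s * (x : ℂ) ^ s / s = F s / s ^ 2 := by
    rw [e1, e2, hxpow, mul_inv]
    simp only [hF_def, hB_def]
    field_simp
  -- rewrite G s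
  have eG : G s = ((F s - F 0) / s - deriv F 0) / s := by
    rw [hG_def, dslope_of_ne _ hs0, slope_def_field, dslope_of_ne _ hs0, slope_def_field,
      dslope_same]
    simp
  rw [show (1 - (k : ℂ) ^ (-((q : ℂ) * s)))⁻¹ * ((1 - (k : ℂ) ^ (1 - (q : ℂ) * s)) *
      riemannZeta ((q : ℂ) * s)) * (x : ℂ) ^ s / s
      = (1 - (k : ℂ) ^ (-((q : ℂ) * s)))⁻¹ * η s * (x : ℂ) ^ s / s by rw [hη_def]]
  rw [eLHS, eG, ← hderivF]
  field_simp
  ring
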